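/- Let C be a finite nonempty set of square-free positive integers, all of whose prime divisors lie in a finite set P of primes. Define S := {{p ∈ C ∸ c : p prime} | c maximal for C}. Then S is an antichain under inclusion, i.e., no member of S is properly contained in another. -/

import Mathlib

/-- For positive integers `a`, `c` define `a ∸ c := a / gcd(a, c)`. -/
def dd (a c : ℕ) : ℕ := a / Nat.gcd a c

/-- `C ∸ c := {a ∸ c | a ∈ C}`. -/
def ddSet (C : Finset ℕ) (c : ℕ) : Finset ℕ := C.image (fun a => dd a c)

/-- `c` is maximal for `C` if `1 ∉ C ∸ c` and `1 ∈ C ∸ (c·d)` for every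
`d > 1` dividing `lcm (C ∸ c)`. -/
def MaximalForDd (C : Finset ℕ) (c : ℕ) : Prop :=
  1 ∉ ddSet C c ∧ ∀ d : ℕ, 1 < d → d ∣ (ddSet C c).lcm id → 1 ∈ ddSet C (c * d)

lemma gcd_mul_dd (a c : ℕ) : Nat.gcd a c * dd a c = a :=
  Nat.mul_div_cancel' (Nat.gcd_dvd_left a c)

lemma dd_dvd (a c : ℕ) : dd a c ∣ a :=
  ⟨Nat.gcd a c, by rw [mul_comm]; exact (gcd_mul_dd a c).symm⟩

lemma dd_pos {a : ℕ} (ha : 0 < a) (c : ℕ) : 0 < dd a c :=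
  Nat.div_pos (Nat.le_of_dvd ha (Nat.gcd_dvd_left a c)) (Nat.gcd_pos_of_pos_left c ha)

lemma dd_eq_one_iff {a : ℕ} (ha : 0 < a) (c : ℕ) : dd a c = 1 ↔ a ∣ c := by
  constructor
  · intro h
    have := gcd_mul_dd a c
    rw [h, mul_one] at this
    exact this ▸ Nat.gcd_dvd_right a c
  · intro h
    unfold dd
    rw [Nat.gcd_eq_left h, Nat.div_self ha]

/-- A dd-residue of a squarefree number is coprime to `c`. -/
lemma dd_coprime {b : ℕ} (hb : 0 < b) (hsf : Squarefree b) (c : ℕ) :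
    Nat.Coprime (dd b c) c := by
  by_contra h
  obtain ⟨r, hr, hrdvd⟩ := Nat.exists_prime_and_dvd h
  have hr1 : r ∣ dd b c := hrdvd.trans (Nat.gcd_dvd_left _ _)
  have hr2 : r ∣ c := hrdvd.trans (Nat.gcd_dvd_right _ _)
  have hrb : r ∣ b := hr1.trans (dd_dvd b c)
  have hrg : r ∣ Nat.gcd b c := Nat.dvd_gcd hrb hr2
  have : r * r ∣ b := by
    calc r * r ∣ Nat.gcd b c * dd b c := mul_dvd_mul hrg hr1
    _ = b := gcd_mul_dd b c
  exact hr.not_isUnit (hsf r this)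

/-- If squarefree `b` divides `c * p` but not `c` (`p` prime), then `dd b c = p`. -/
lemma dd_eq_prime {b c p : ℕ} (hb : 0 < b) (hsf : Squarefree b) (hp : p.Prime)
    (hdvd : b ∣ c * p) (hnd : ¬ b ∣ c) : dd b c = p := by
  have h1 : dd b c ∣ c * p := (dd_dvd b c).trans hdvd
  have h2 : dd b c ∣ p := (Nat.Coprime.dvd_of_dvd_mul_left (dd_coprime hb hsf c) h1)
  have h3 : dd b c ≠ 1 := fun h => hnd ((dd_eq_one_iff hb c).mp h)
  exact ((Nat.dvd_prime hp).mp h2).resolve_left h3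

/-- If `dd a c` is a prime `p`, then `p` does not divide `c`. -/
lemma prime_dd_not_dvd {a c p : ℕ} (ha : 0 < a) (hsf : Squarefree a) (hp : p.Prime)
    (h : dd a c = p) : ¬ p ∣ c := by
  intro hpc
  have hpa : p ∣ a := h ▸ dd_dvd a c
  have hpg : p ∣ Nat.gcd a c := Nat.dvd_gcd hpa hpc
  have : p * p ∣ a := by
    calc p * p ∣ Nat.gcd a c * dd a c := mul_dvd_mul hpg (h ▸ dvd_refl p)
    _ = a := gcd_mul_dd a c
  exact hp.not_isUnit (hsf p this)

theorem stmt_19 (C P : Finset ℕ) (hC : C.Nonempty)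
    (hpos : ∀ a ∈ C, 0 < a) (hsf : ∀ a ∈ C, Squarefree a)
    (hPp : ∀ p ∈ P, p.Prime)
    (hP : ∀ a ∈ C, ∀ p : ℕ, p.Prime → p ∣ a → p ∈ P) :
    ∀ c₁ c₂ : ℕ, 0 < c₁ → 0 < c₂ → MaximalForDd C c₁ → MaximalForDd C c₂ →
      ¬ ((ddSet C c₁).filter Nat.Prime ⊂ (ddSet C c₂).filter Nat.Prime) := by
  rintro c₁ c₂ hc₁ hc₂ ⟨h11, h12⟩ ⟨h21, h22⟩ hss
  obtain ⟨hsub, hne⟩ := hss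
  -- q ∈ Q₂ \ Q₁
  obtain ⟨q, hqQ₂, hqQ₁⟩ : ∃ q, q ∈ (ddSet C c₂).filter Nat.Prime ∧
      q ∉ (ddSet C c₁).filter Nat.Prime := by
    by_contra h
    push_neg at h
    exact hne (fun x hx => h x hx)
  rw [Finset.mem_filter] at hqQ₂
  obtain ⟨hqmem, hqprime⟩ := hqQ₂
  rw [ddSet, Finset.mem_image] at hqmem
  obtain ⟨aq, haqC, haq⟩ := hqmem
  have haqpos : 0 < aq := hpos aq haqC
  have haqsf : Squarefree aq := hsf aq haqC
  -- q does not divide c₂, and aq = gcd(aq,c₂) * q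
  have hqc₂ : ¬ q ∣ c₂ := prime_dd_not_dvd haqpos haqsf hqprime haq
  have haqfact : Nat.gcd aq c₂ * q = aq := by rw [← haq]; exact gcd_mul_dd aq c₂
  -- aq does not divide c₁
  have haqnd : ¬ aq ∣ c₁ := by
    intro h
    apply h11
    rw [ddSet, Finset.mem_image]
    exact ⟨aq, haqC, (dd_eq_one_iff haqpos c₁).mpr h⟩
  -- dd aq c₁ has a prime factor p
  have hr1 : dd aq c₁ ≠ 1 := fun h => haqnd ((dd_eq_one_iff haqpos c₁).mp h)
  obtain ⟨p, hpprime, hpdvd⟩ := Nat.exists_prime_and_dvd hr1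
  -- p divides the lcm of ddSet C c₁
  have hrmem : dd aq c₁ ∈ ddSet C c₁ := Finset.mem_image.mpr ⟨aq, haqC, rfl⟩
  have hplcm : p ∣ (ddSet C c₁).lcm id := hpdvd.trans (Finset.dvd_lcm hrmem)
  -- by maximality of c₁, p ∈ Q₁
  have h1mem := h12 p hpprime.one_lt hplcm
  rw [ddSet, Finset.mem_image] at h1mem
  obtain ⟨b, hbC, hb⟩ := h1mem
  have hbpos : 0 < b := hpos b hbC
  have hbdvd : b ∣ c₁ * p := (dd_eq_one_iff hbpos (c₁ * p)).mp hb
  have hbnd : ¬ b ∣ c₁ := by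
    intro h
    apply h11
    rw [ddSet, Finset.mem_image]
    exact ⟨b, hbC, (dd_eq_one_iff hbpos c₁).mpr h⟩
  have hbp : dd b c₁ = p := dd_eq_prime hbpos (hsf b hbC) hpprime hbdvd hbnd
  have hpQ₁ : p ∈ (ddSet C c₁).filter Nat.Prime := by
    rw [Finset.mem_filter]
    exact ⟨Finset.mem_image.mpr ⟨b, hbC, hbp⟩, hpprime⟩
  -- hence p ∈ Q₂, so p does not divide c₂
  have hpQ₂ := hsub hpQ₁
  rw [Finset.mem_filter] at hpQ₂
  obtain ⟨hpmem, -⟩ := hpQ₂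
  rw [ddSet, Finset.mem_image] at hpmem
  obtain ⟨ap, hapC, hap⟩ := hpmem
  have hpc₂ : ¬ p ∣ c₂ := prime_dd_not_dvd (hpos ap hapC) (hsf ap hapC) hpprime hap
  -- but p ≠ q and p ∣ aq = gcd(aq,c₂) * q forces p ∣ c₂
  have hpq : p ≠ q := fun h => hqQ₁ (h ▸ hpQ₁)
  have hpaq : p ∣ aq := hpdvd.trans (dd_dvd aq c₁)
  rw [← haqfact] at hpaq
  have : p ∣ Nat.gcd aq c₂ :=
    (hpprime.dvd_mul.mp hpaq).resolve_right
      (fun h => hpq ((Nat.prime_dvd_prime_iff_eq hpprime hqprime).mp h))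
  exact hpc₂ (this.trans (Nat.gcd_dvd_right aq c₂))
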